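/- Let 𝓕 be a nonempty family of subsets of {1, …, n}, and for each j ∈ {1, …, n} let q_j denote the fraction of members of 𝓕 that contain j. Then for every α ≥ 1: ln_α|𝓕| ≤ Σ_{j=1}^n h_α(q_j). -/

import Mathlib

open Finset

/-- The α-logarithm: `ln_α(ξ) = (ξ^(1-α) - 1)/(1-α)` for `α ≠ 1`, and `ln ξ` for `α = 1`. -/
noncomputable def alphaLog (α ξ : ℝ) : ℝ :=
  if α = 1 then Real.log ξ else (ξ ^ (1 - α) - 1) / (1 - α)

/-- The Tsallis–Havrda–Charvát entropy of order `α` of a pmf `p` on a finite set. -/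
noncomputable def thc (α : ℝ) {S : Type*} [Fintype S] (p : S → ℝ) : ℝ :=
  if α = 1 then -∑ s, p s * Real.log (p s)
  else ((∑ s, p s ^ α) - 1) / (1 - α)

/-- The binary THC entropy `h_α(q)`. -/
noncomputable def binThc (α q : ℝ) : ℝ :=
  if α = 1 then -(q * Real.log q) - (1 - q) * Real.log (1 - q)
  else (q ^ α + (1 - q) ^ α - 1) / (1 - α)

/-- First conditional THC entropy (Daróczy form): `H_α(X|Y) = Σ_y p(y)^α H_α(X|y)`,
where `p` is the joint pmf of `(X, Y)`.  (Terms with `p(y) = 0` vanish for `α > 0`.) -/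
noncomputable def condThc1 (α : ℝ) {SX SY : Type*} [Fintype SX] [Fintype SY]
    (p : SX × SY → ℝ) : ℝ :=
  ∑ y, (∑ x, p (x, y)) ^ α * thc α (fun x => p (x, y) / ∑ x', p (x', y))

/-- Second conditional THC entropy: `H̃_α(X|Y) = Σ_y p(y) H_α(X|y)`,
where `p` is the joint pmf of `(X, Y)`.  (Terms with `p(y) = 0` vanish.) -/
noncomputable def condThc2 (α : ℝ) {SX SY : Type*} [Fintype SX] [Fintype SY]
    (p : SX × SY → ℝ) : ℝ :=
  ∑ y, (∑ x, p (x, y)) * thc α (fun x => p (x, y) / ∑ x', p (x', y))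

/-- The pmf of a random variable `X` defined on a finite sample space with pmf `μ`. -/
noncomputable def distOf {Ω S : Type*} [Fintype Ω] [DecidableEq S]
    (μ : Ω → ℝ) (X : Ω → S) : S → ℝ :=
  fun s => ∑ ω ∈ Finset.univ.filter (fun ω => X ω = s), μ ω


/-- Let `𝓕` be a nonempty family of subsets of `{1, …, n}` and let `q j`
be the fraction of members of `𝓕` containing `j`.  Then for every `α ≥ 1`:
`ln_α |𝓕| ≤ Σ_j h_α(q j)`. -/
lemma alphaLog_one (α : ℝ) : alphaLog α 1 = 0 := by
  unfold alphaLog; split_ifs <;> simp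

lemma binThc_zero {α : ℝ} (hα : 1 ≤ α) : binThc α 0 = 0 := by
  unfold binThc; split_ifs <;> simp [Real.zero_rpow (by linarith : α ≠ 0)]

lemma binThc_one {α : ℝ} (hα : 1 ≤ α) : binThc α 1 = 0 := by
  unfold binThc; split_ifs <;> simp [Real.zero_rpow (by linarith : α ≠ 0)]

lemma rpow_le_self_of_le_one {x α : ℝ} (hx : 0 ≤ x) (h1 : x ≤ 1) (hα : 1 ≤ α) :
    x ^ α ≤ x := by
  rcases eq_or_lt_of_le hx with h | h
  · rw [← h, Real.zero_rpow (by linarith)]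
  · calc x ^ α ≤ x ^ (1:ℝ) := Real.rpow_le_rpow_of_exponent_ge h h1 hα
      _ = x := Real.rpow_one x

lemma binThc_nonneg {α q : ℝ} (hα : 1 ≤ α) (h0 : 0 ≤ q) (h1 : q ≤ 1) :
    0 ≤ binThc α q := by
  unfold binThc
  split_ifs with h
  · have l1 : q * Real.log q ≤ 0 :=
      mul_nonpos_iff.mpr (Or.inl ⟨h0, Real.log_nonpos h0 h1⟩)
    have l2 : (1 - q) * Real.log (1 - q) ≤ 0 :=
      mul_nonpos_iff.mpr (Or.inl ⟨by linarith, Real.log_nonpos (by linarith) (by linarith)⟩)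
    linarith
  · have hlt : 1 < α := lt_of_le_of_ne hα (Ne.symm h)
    have l1 : q ^ α ≤ q := rpow_le_self_of_le_one h0 h1 hα
    have l2 : (1 - q) ^ α ≤ 1 - q :=
      rpow_le_self_of_le_one (by linarith) (by linarith) hα
    exact div_nonneg_iff.mpr (Or.inr ⟨by linarith, by linarith⟩)

lemma convexOn_flip {f : ℝ → ℝ} (h : ConvexOn ℝ (Set.Icc (0:ℝ) 1) f) :
    ConvexOn ℝ (Set.Icc (0:ℝ) 1) (fun q => f (1 - q)) := by
  refine ⟨convex_Icc 0 1, ?_⟩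
  intro x hx y hy a b ha hb hab
  have hx' : (1:ℝ) - x ∈ Set.Icc (0:ℝ) 1 := ⟨by linarith [hx.2], by linarith [hx.1]⟩
  have hy' : (1:ℝ) - y ∈ Set.Icc (0:ℝ) 1 := ⟨by linarith [hy.2], by linarith [hy.1]⟩
  have := h.2 hx' hy' ha hb hab
  have e : a • ((1:ℝ) - x) + b • ((1:ℝ) - y) = 1 - (a • x + b • y) := by
    simp only [smul_eq_mul]; nlinarith [hab]
  rw [e] at this
  simpa using this

lemma concaveOn_flip {f : ℝ → ℝ} (h : ConcaveOn ℝ (Set.Icc (0:ℝ) 1) f) :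
    ConcaveOn ℝ (Set.Icc (0:ℝ) 1) (fun q => f (1 - q)) := by
  refine ⟨convex_Icc 0 1, ?_⟩
  intro x hx y hy a b ha hb hab
  have hx' : (1:ℝ) - x ∈ Set.Icc (0:ℝ) 1 := ⟨by linarith [hx.2], by linarith [hx.1]⟩
  have hy' : (1:ℝ) - y ∈ Set.Icc (0:ℝ) 1 := ⟨by linarith [hy.2], by linarith [hy.1]⟩
  have := h.2 hx' hy' ha hb hab
  have e : a • ((1:ℝ) - x) + b • ((1:ℝ) - y) = 1 - (a • x + b • y) := by
    simp only [smul_eq_mul]; nlinarith [hab]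
  rw [e] at this
  simpa using this

lemma binThc_concaveOn {α : ℝ} (hα : 1 ≤ α) :
    ConcaveOn ℝ (Set.Icc (0:ℝ) 1) (binThc α) := by
  rcases eq_or_lt_of_le hα with h1 | h1
  · have hneg : ConcaveOn ℝ (Set.Icc (0:ℝ) 1) Real.negMulLog :=
      (Real.strictConcaveOn_negMulLog.concaveOn).subset Set.Icc_subset_Ici_self (convex_Icc 0 1)
    have hsum : ConcaveOn ℝ (Set.Icc (0:ℝ) 1)
        (fun q => Real.negMulLog q + Real.negMulLog (1 - q)) :=
      hneg.add (concaveOn_flip hneg)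
    have hfun : binThc α = fun q => Real.negMulLog q + Real.negMulLog (1 - q) := by
      funext q
      simp only [binThc, if_pos h1.symm, Real.negMulLog]
      ring
    rw [hfun]; exact hsum
  · have hne : α ≠ 1 := (ne_of_lt h1).symm
    have hc1 : ConvexOn ℝ (Set.Icc (0:ℝ) 1) (fun q : ℝ => q ^ α) :=
      (convexOn_rpow hα).subset Set.Icc_subset_Ici_self (convex_Icc 0 1)
    have hc : ConvexOn ℝ (Set.Icc (0:ℝ) 1)
        ((fun q : ℝ => q ^ α) + fun q : ℝ => (1 - q) ^ α) :=
      hc1.add (convexOn_flip hc1)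
    have hconc := ((hc.neg).smul (c := (α - 1)⁻¹)
      (inv_nonneg.mpr (by linarith))).add_const ((α - 1)⁻¹)
    have hfun : binThc α = (fun q : ℝ =>
        (α - 1)⁻¹ • (-((fun q : ℝ => q ^ α) + fun q : ℝ => (1 - q) ^ α) q)) + fun _ => (α - 1)⁻¹ := by
      funext q
      simp only [binThc, if_neg hne, Pi.add_apply, Pi.neg_apply, smul_eq_mul]
      have h2 : (1:ℝ) - α ≠ 0 := by intro h; apply hne; linarith
      have h3 : α - 1 ≠ 0 := by intro h; apply hne; linarith
      field_simp
      ring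
    rw [hfun]; exact hconc

lemma alphaLog_chain {α a b : ℝ} (ha : 0 < a) (hb : 0 < b) :
    alphaLog α (a + b) = binThc α (b / (a + b))
      + (b / (a + b)) ^ α * alphaLog α b + (a / (a + b)) ^ α * alphaLog α a := by
  have hs : 0 < a + b := by linarith
  have e1 : 1 - b / (a + b) = a / (a + b) := by field_simp; ring
  rcases eq_or_ne α 1 with h1 | h1
  · subst h1
    simp only [alphaLog, binThc, if_pos rfl, ↓reduceIte, Real.rpow_one]
    rw [e1, Real.log_div hb.ne' hs.ne', Real.log_div ha.ne' hs.ne']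
    field_simp
    ring
  · simp only [alphaLog, binThc, if_neg h1]
    rw [e1, Real.div_rpow hb.le hs.le, Real.div_rpow ha.le hs.le]
    have hbb : b ^ α * b ^ (1 - α) = b := by
      rw [← Real.rpow_add hb]; simp
    have haa : a ^ α * a ^ (1 - α) = a := by
      rw [← Real.rpow_add ha]; simp
    have hss : (a + b) ^ α * (a + b) ^ (1 - α) = a + b := by
      rw [← Real.rpow_add hs]; simp
    have hsα : ((a + b) : ℝ) ^ α ≠ 0 := (Real.rpow_pos_of_pos hs α).ne'
    have key : b ^ α / (a + b) ^ α * b ^ (1 - α) + a ^ α / (a + b) ^ α * a ^ (1 - α)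
        = (a + b) ^ (1 - α) := by
      rw [div_mul_eq_mul_div, div_mul_eq_mul_div, hbb, haa, ← add_div,
        div_eq_iff hsα, mul_comm, hss]
      ring
    linear_combination ((-1 : ℝ)/(1 - α)) * key

lemma binThc_combine {α w0 w1 q0 q1 : ℝ} (hα : 1 ≤ α) (hw0 : 0 ≤ w0) (hw1 : 0 ≤ w1)
    (hw : w0 + w1 = 1) (hq00 : 0 ≤ q0) (hq01 : q0 ≤ 1) (hq10 : 0 ≤ q1) (hq11 : q1 ≤ 1) :
    w1 ^ α * binThc α q1 + w0 ^ α * binThc α q0 ≤ binThc α (w0 * q0 + w1 * q1) := by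
  have h0 : 0 ≤ binThc α q0 := binThc_nonneg hα hq00 hq01
  have h1 : 0 ≤ binThc α q1 := binThc_nonneg hα hq10 hq11
  have k0 : w0 ^ α ≤ w0 := rpow_le_self_of_le_one hw0 (by linarith) hα
  have k1 : w1 ^ α ≤ w1 := rpow_le_self_of_le_one hw1 (by linarith) hα
  have step1 : w1 ^ α * binThc α q1 + w0 ^ α * binThc α q0
      ≤ w1 * binThc α q1 + w0 * binThc α q0 := by
    have := mul_le_mul_of_nonneg_right k1 h1
    have := mul_le_mul_of_nonneg_right k0 h0
    linarith
  have step2 : w0 * binThc α q0 + w1 * binThc α q1 ≤ binThc α (w0 * q0 + w1 * q1) := by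
    have := (binThc_concaveOn hα).2 (x := q0) (y := q1) ⟨hq00, hq01⟩ ⟨hq10, hq11⟩ hw0 hw1 hw
    simpa [smul_eq_mul] using this
  linarith

section Erase
variable {F : Finset (Finset ℕ)} {a : ℕ}

lemma erase_injOn (hmem : ∀ A ∈ F, a ∈ A) :
    Set.InjOn (fun A : Finset ℕ => A.erase a) ↑F := by
  intro A hA B hB h
  have h2 : insert a (A.erase a) = insert a (B.erase a) := by
    simp only at h; rw [h]
  rwa [Finset.insert_erase (hmem A hA), Finset.insert_erase (hmem B hB)] at h2

lemma erase_image_card (hmem : ∀ A ∈ F, a ∈ A) :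
    (F.image (fun A => A.erase a)).card = F.card :=
  Finset.card_image_of_injOn (erase_injOn hmem)

lemma erase_image_filter_card (hmem : ∀ A ∈ F, a ∈ A) {j : ℕ} (hj : j ≠ a) :
    ((F.image (fun A => A.erase a)).filter (fun B => j ∈ B)).card
      = (F.filter (fun A => j ∈ A)).card := by
  rw [Finset.filter_image]
  have he : F.filter (fun A => j ∈ A.erase a) = F.filter (fun A => j ∈ A) := by
    apply Finset.filter_congr
    intro A _
    simp [Finset.mem_erase, hj]
  rw [he]
  exact Finset.card_image_of_injOn ((erase_injOn hmem).mono (Finset.filter_subset _ _))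

lemma erase_image_subset {s : Finset ℕ} (hsub : ∀ A ∈ F, A ⊆ insert a s) :
    ∀ B ∈ F.image (fun A => A.erase a), B ⊆ s := by
  intro B hB
  obtain ⟨A, hA, rfl⟩ := Finset.mem_image.mp hB
  intro x hx
  obtain ⟨hxa, hxA⟩ := Finset.mem_erase.mp hx
  rcases Finset.mem_insert.mp (hsub A hA hxA) with h | h
  · exact absurd h hxa
  · exact h

end Erase

lemma key_induction (α : ℝ) (hα : 1 ≤ α) (J : Finset ℕ) :
    ∀ F : Finset (Finset ℕ), F.Nonempty → (∀ A ∈ F, A ⊆ J) →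
      alphaLog α (F.card : ℝ) ≤
        ∑ j ∈ J, binThc α (((F.filter (fun A => j ∈ A)).card : ℝ) / (F.card : ℝ)) := by
  classical
  induction J using Finset.induction_on with
  | empty =>
    intro F hF hsub
    have hFe : F = {∅} := by
      apply Finset.Subset.antisymm
      · intro A hA
        simpa using Finset.subset_empty.mp (hsub A hA)
      · obtain ⟨A, hA⟩ := hF
        have hA' := Finset.subset_empty.mp (hsub A hA)
        subst hA'
        simpa using hA
    rw [hFe]
    simp [alphaLog_one]
  | insert a s ha ih =>
    intro F hF hsub
    have hcard : (F.filter (fun A => a ∈ A)).card + (F.filter (fun A => a ∉ A)).card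
        = F.card := Finset.card_filter_add_card_filter_not _
    have hcount : ∀ j : ℕ, (F.filter (fun A => j ∈ A)).card
        = ((F.filter (fun A => a ∈ A)).filter (fun A => j ∈ A)).card
          + ((F.filter (fun A => a ∉ A)).filter (fun A => j ∈ A)).card := by
      intro j
      have h := Finset.card_filter_add_card_filter_not
        (s := F.filter (fun A => j ∈ A)) (p := fun A => a ∈ A)
      rw [Finset.filter_comm (fun A => j ∈ A) (fun A => a ∈ A),
        Finset.filter_comm (fun A => j ∈ A) (fun A => a ∉ A)] at h
      exact h.symm
    by_cases h1 : F.filter (fun A => a ∈ A) = ∅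
    · -- nobody contains a
      have hnotin : ∀ A ∈ F, a ∉ A := by
        intro A hA haA
        have : A ∈ F.filter (fun A => a ∈ A) := Finset.mem_filter.mpr ⟨hA, haA⟩
        simp [h1] at this
      have hsub' : ∀ A ∈ F, A ⊆ s := fun A hA =>
        (Finset.subset_insert_iff_of_notMem (hnotin A hA)).mp (hsub A hA)
      have hterm : binThc α (((F.filter (fun A => a ∈ A)).card : ℝ) / (F.card : ℝ)) = 0 := by
        rw [h1]
        simpa using binThc_zero hα
      rw [Finset.sum_insert ha, hterm, zero_add]
      exact ih F hF hsub'
    · by_cases h0 : F.filter (fun A => a ∉ A) = ∅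
      · -- everybody contains a
        have hmem : ∀ A ∈ F, a ∈ A := by
          intro A hA
          by_contra hn
          have : A ∈ F.filter (fun A => a ∉ A) := Finset.mem_filter.mpr ⟨hA, hn⟩
          simp [h0] at this
        have hfilt : F.filter (fun A => a ∈ A) = F := Finset.filter_true_of_mem hmem
        have hNpos : (0:ℝ) < (F.card : ℝ) := by
          exact_mod_cast Finset.card_pos.mpr hF
        have hterm : binThc α (((F.filter (fun A => a ∈ A)).card : ℝ) / (F.card : ℝ)) = 0 := by
          rw [hfilt, div_self hNpos.ne']
          exact binThc_one hα
        rw [Finset.sum_insert ha, hterm, zero_add]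
        have hF'ne : (F.image (fun A => A.erase a)).Nonempty := hF.image _
        have hih := ih (F.image (fun A => A.erase a)) hF'ne (erase_image_subset hsub)
        rw [erase_image_card hmem] at hih
        refine hih.trans (le_of_eq (Finset.sum_congr rfl fun j hj => ?_))
        rw [erase_image_filter_card hmem (ne_of_mem_of_not_mem hj ha)]
      · -- main case: both parts nonempty
        have hF0ne : (F.filter (fun A => a ∉ A)).Nonempty := Finset.nonempty_iff_ne_empty.mpr h0
        have hF1ne : (F.filter (fun A => a ∈ A)).Nonempty := Finset.nonempty_iff_ne_empty.mpr h1
        have hmem1 : ∀ A ∈ F.filter (fun A => a ∈ A), a ∈ A := fun A hA =>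
          (Finset.mem_filter.mp hA).2
        set N0 : ℝ := ((F.filter (fun A => a ∉ A)).card : ℝ) with hN0def
        set N1 : ℝ := ((F.filter (fun A => a ∈ A)).card : ℝ) with hN1def
        have hN0 : 0 < N0 := by rw [hN0def]; exact_mod_cast Finset.card_pos.mpr hF0ne
        have hN1 : 0 < N1 := by rw [hN1def]; exact_mod_cast Finset.card_pos.mpr hF1ne
        have hNr : (F.card : ℝ) = N0 + N1 := by
          rw [hN0def, hN1def, ← hcard]; push_cast; ring
        -- IH for the two halves
        have hsub0 : ∀ A ∈ F.filter (fun A => a ∉ A), A ⊆ s := fun A hA =>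
          (Finset.subset_insert_iff_of_notMem (Finset.mem_filter.mp hA).2).mp
            (hsub A (Finset.mem_filter.mp hA).1)
        have ih0 := ih _ hF0ne hsub0
        have hsub1 : ∀ A ∈ F.filter (fun A => a ∈ A), A ⊆ insert a s := fun A hA =>
          hsub A (Finset.mem_filter.mp hA).1
        have ih1 := ih ((F.filter (fun A => a ∈ A)).image (fun A => A.erase a))
          (hF1ne.image _) (erase_image_subset hsub1)
        rw [erase_image_card hmem1] at ih1
        have ih1' : alphaLog α N1 ≤ ∑ j ∈ s,
            binThc α ((((F.filter (fun A => a ∈ A)).filter (fun A => j ∈ A)).card : ℝ) / N1) := by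
          refine ih1.trans (le_of_eq (Finset.sum_congr rfl fun j hj => ?_))
          rw [erase_image_filter_card hmem1 (ne_of_mem_of_not_mem hj ha)]
        -- chain rule
        have hchain := alphaLog_chain (α := α) hN0 hN1
        have hw0 : (0:ℝ) ≤ N0 / (N0 + N1) := by positivity
        have hw1 : (0:ℝ) ≤ N1 / (N0 + N1) := by positivity
        have hwsum : N0 / (N0 + N1) + N1 / (N0 + N1) = 1 := by
          field_simp
        calc alphaLog α (F.card : ℝ)
            = binThc α (N1 / (N0 + N1)) + (N1 / (N0 + N1)) ^ α * alphaLog α N1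
              + (N0 / (N0 + N1)) ^ α * alphaLog α N0 := by rw [hNr]; exact hchain
          _ ≤ binThc α (N1 / (N0 + N1))
              + (N1 / (N0 + N1)) ^ α * (∑ j ∈ s,
                  binThc α ((((F.filter (fun A => a ∈ A)).filter (fun A => j ∈ A)).card : ℝ) / N1))
              + (N0 / (N0 + N1)) ^ α * (∑ j ∈ s,
                  binThc α ((((F.filter (fun A => a ∉ A)).filter (fun A => j ∈ A)).card : ℝ) / N0)) := by
              have l1 := mul_le_mul_of_nonneg_left ih1' (Real.rpow_nonneg hw1 α)
              have l0 := mul_le_mul_of_nonneg_left ih0 (Real.rpow_nonneg hw0 α)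
              linarith
          _ = binThc α (N1 / (N0 + N1)) + ∑ j ∈ s,
                ((N1 / (N0 + N1)) ^ α *
                    binThc α ((((F.filter (fun A => a ∈ A)).filter (fun A => j ∈ A)).card : ℝ) / N1)
                  + (N0 / (N0 + N1)) ^ α *
                    binThc α ((((F.filter (fun A => a ∉ A)).filter (fun A => j ∈ A)).card : ℝ) / N0)) := by
              rw [Finset.mul_sum, Finset.mul_sum, add_assoc, ← Finset.sum_add_distrib]
          _ ≤ binThc α (N1 / (N0 + N1)) + ∑ j ∈ s,
                binThc α (((F.filter (fun A => j ∈ A)).card : ℝ) / (F.card : ℝ)) := by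
              apply add_le_add_right
              apply Finset.sum_le_sum
              intro j hj
              set c1 : ℝ := (((F.filter (fun A => a ∈ A)).filter (fun A => j ∈ A)).card : ℝ) with hc1def
              set c0 : ℝ := (((F.filter (fun A => a ∉ A)).filter (fun A => j ∈ A)).card : ℝ) with hc0def
              have hc1b : c1 ≤ N1 := by
                rw [hc1def, hN1def]
                exact_mod_cast Finset.card_filter_le _ _
              have hc0b : c0 ≤ N0 := by
                rw [hc0def, hN0def]
                exact_mod_cast Finset.card_filter_le _ _
              have hc1p : 0 ≤ c1 := by positivity
              have hc0p : 0 ≤ c0 := by positivity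
              have hcomb := binThc_combine (α := α) hα hw0 hw1 hwsum
                (div_nonneg hc0p hN0.le) ((div_le_one hN0).mpr hc0b)
                (div_nonneg hc1p hN1.le) ((div_le_one hN1).mpr hc1b)
              have harg : N0 / (N0 + N1) * (c0 / N0) + N1 / (N0 + N1) * (c1 / N1)
                  = ((F.filter (fun A => j ∈ A)).card : ℝ) / (F.card : ℝ) := by
                rw [hNr]
                have : ((F.filter (fun A => j ∈ A)).card : ℝ) = c1 + c0 := by
                  rw [hcount j]; push_cast; ring
                rw [this]
                field_simp
                ring
              rw [harg] at hcomb
              exact hcomb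
          _ = ∑ j ∈ insert a s,
                binThc α (((F.filter (fun A => j ∈ A)).card : ℝ) / (F.card : ℝ)) := by
              rw [Finset.sum_insert ha, hNr]

theorem alphaLog_card_le_sum_binThc (n : ℕ) (F : Finset (Finset (Fin n))) (hF : F.Nonempty)
    (q : Fin n → ℝ)
    (hq : ∀ j, q j = ((F.filter (fun A => j ∈ A)).card : ℝ) / (F.card : ℝ))
    (α : ℝ) (hα : 1 ≤ α) :
    alphaLog α (F.card : ℝ) ≤ ∑ j, binThc α (q j) := by
  classical
  set G : Finset (Finset ℕ) := F.image (fun A => A.image Fin.val) with hGdef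
  have hinj : Function.Injective (fun A : Finset (Fin n) => A.image Fin.val) :=
    fun A B h => Finset.image_injective Fin.val_injective h
  have hGcard : G.card = F.card := Finset.card_image_of_injective _ hinj
  have hGne : G.Nonempty := hF.image _
  have hGsub : ∀ B ∈ G, B ⊆ Finset.range n := by
    intro B hB
    obtain ⟨A, hA, rfl⟩ := Finset.mem_image.mp hB
    intro x hx
    obtain ⟨i, hi, rfl⟩ := Finset.mem_image.mp hx
    exact Finset.mem_range.mpr i.isLt
  have key := key_induction α hα (Finset.range n) G hGne hGsub
  have hcnt : ∀ j : Fin n,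
      (G.filter (fun B => (j : ℕ) ∈ B)).card = (F.filter (fun A => j ∈ A)).card := by
    intro j
    rw [hGdef, Finset.filter_image]
    have he : F.filter (fun A => (j : ℕ) ∈ A.image Fin.val) = F.filter (fun A => j ∈ A) := by
      apply Finset.filter_congr
      intro A _
      simp [Fin.val_injective.mem_finset_image]
    rw [he]
    exact Finset.card_image_of_injective _ hinj
  rw [hGcard] at key
  refine key.trans (le_of_eq ?_)
  rw [← Fin.sum_univ_eq_sum_range
    (fun j => binThc α (((G.filter (fun B => j ∈ B)).card : ℝ) / (F.card : ℝ))) n]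
  apply Finset.sum_congr rfl
  intro j _
  rw [hq j, hcnt j]
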